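/- For all real numbers x ≥ 0, y ≥ 0 and every real β > 0, setting c = (x+y)/((1+x)(1+y)) and d = 1 − 1/((1+x)(1+y)), the iterated series ∑_{p=1}^{∞} ∑_{m=1}^{p} (−1)^m (2β^{2m}/(2m)!) C(p−1, m−1) c^m d^{p−m} converges and its sum equals 2(cos(β·√(x+y)) − 1), where C(n,k) denotes the binomial coefficient. -/

import Mathlib

/-- The full untruncated 2D ADI expansion reproduces the exact semi-discrete evolution
at the Fourier-symbol level: with `c = (x+y)/((1+x)(1+y))`, `d = 1 − 1/((1+x)(1+y))`,
`∑_{p=1}^{∞} ∑_{m=1}^{p} (−1)^m (2β^{2m}/(2m)!) C(p−1,m−1) c^m d^{p−m}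
  = 2(cos(β√(x+y)) − 1)` (outer index `p = q + 1`). -/
theorem stmt_14 (x y : ℝ) (hx : 0 ≤ x) (hy : 0 ≤ y) (β : ℝ) (hβ : 0 < β) :
    HasSum (fun q : ℕ =>
        ∑ m ∈ Finset.Icc 1 (q + 1),
          (-1 : ℝ) ^ m * (2 * β ^ (2 * m) / (Nat.factorial (2 * m))) *
            (q.choose (m - 1)) *
            ((x + y) / ((1 + x) * (1 + y))) ^ m *
            (1 - 1 / ((1 + x) * (1 + y))) ^ (q + 1 - m))
      (2 * (Real.cos (β * Real.sqrt (x + y)) - 1)) := by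
  classical
  set D : ℝ := (1 + x) * (1 + y) with hDdef
  have hD1 : 1 ≤ D := by nlinarith
  have hD0 : 0 < D := by linarith
  set c : ℝ := (x + y) / D with hcdef
  set d : ℝ := 1 - 1 / D with hddef
  have hc0 : 0 ≤ c := div_nonneg (by linarith) hD0.le
  have hd0 : 0 ≤ d := by
    have h1 : 1 / D ≤ 1 := div_le_one_of_le₀ hD1 (by linarith)
    simp only [hddef]; linarith
  have hd1 : d < 1 := by
    have h1 : 0 < 1 / D := by positivity
    simp only [hddef]; linarith
  have hdn : ‖d‖ < 1 := by rw [Real.norm_eq_abs, abs_of_nonneg hd0]; exact hd1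
  have h1d : (1 : ℝ) - d = 1 / D := by simp [hddef]
  have h1dpow : ∀ n : ℕ, 1 / (1 - d) ^ (n + 1) = D ^ (n + 1) := by
    intro n
    rw [h1d]
    simp only [one_div, inv_pow, inv_inv]
  set r : ℝ := β * Real.sqrt (x + y) with hrdef
  have hxy : 0 ≤ x + y := by linarith
  have hr2 : r ^ 2 = β ^ 2 * (x + y) := by
    rw [hrdef, mul_pow, Real.sq_sqrt hxy]
  set G : ℕ × ℕ → ℝ := fun p =>
    (-1 : ℝ) ^ (p.1 + 1) * (2 * β ^ (2 * (p.1 + 1)) / (Nat.factorial (2 * (p.1 + 1)))) *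
      ((p.2 + p.1).choose p.1) * c ^ (p.1 + 1) * d ^ p.2 with hGdef
  set S : ℕ → ℝ := fun n =>
    (-1 : ℝ) ^ (n + 1) * (2 * β ^ (2 * (n + 1)) / (Nat.factorial (2 * (n + 1)))) *
      (x + y) ^ (n + 1) with hSdef
  have hcD : c * D = x + y := by rw [hcdef, div_mul_cancel₀ _ hD0.ne']
  have hcDpow : ∀ n : ℕ, c ^ (n + 1) * D ^ (n + 1) = (x + y) ^ (n + 1) := by
    intro n; rw [← mul_pow, hcD]
  -- fiberwise sums
  have hFib : ∀ n : ℕ, HasSum (fun j => G (n, j)) (S n) := by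
    intro n
    have h := (hasSum_choose_mul_geometric_of_norm_lt_one (𝕜 := ℝ) n hdn).mul_left
      ((-1 : ℝ) ^ (n + 1) * (2 * β ^ (2 * (n + 1)) / (Nat.factorial (2 * (n + 1)))) * c ^ (n + 1))
    have heq : (fun j => G (n, j)) = fun j =>
        (-1 : ℝ) ^ (n + 1) * (2 * β ^ (2 * (n + 1)) / (Nat.factorial (2 * (n + 1)))) *
          c ^ (n + 1) * (((j + n).choose n : ℝ) * d ^ j) := by
      funext j; simp only [hGdef]; ring
    have hval : (-1 : ℝ) ^ (n + 1) * (2 * β ^ (2 * (n + 1)) / (Nat.factorial (2 * (n + 1)))) *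
        c ^ (n + 1) * (1 / (1 - d) ^ (n + 1)) = S n := by
      rw [h1dpow]
      simp only [hSdef]
      rw [← hcDpow n]
      ring
    rw [heq]
    exact hval ▸ h
  -- the outer series sums to the cosine expression
  have hcos := (Real.hasSum_cos r).mul_left 2
  have hcos' : HasSum (fun n : ℕ => 2 * ((-1 : ℝ) ^ n * (β ^ (2 * n) * (x + y) ^ n) /
      (Nat.factorial (2 * n)))) (2 * Real.cos r) := by
    have heq : (fun n : ℕ => 2 * ((-1 : ℝ) ^ n * (β ^ (2 * n) * (x + y) ^ n) /
        (Nat.factorial (2 * n)))) =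
        fun n : ℕ => 2 * ((-1 : ℝ) ^ n * r ^ (2 * n) / (Nat.factorial (2 * n))) := by
      funext n
      conv_rhs => rw [pow_mul, hr2, mul_pow, ← pow_mul]
    rw [heq]
    exact hcos
  have hS : HasSum S (2 * (Real.cos r - 1)) := by
    have h := (hasSum_nat_add_iff' (f := fun n : ℕ => 2 * ((-1 : ℝ) ^ n *
        (β ^ (2 * n) * (x + y) ^ n) / (Nat.factorial (2 * n)))) 1).2 hcos'
    have heq : S = fun n : ℕ => 2 * ((-1 : ℝ) ^ (n + 1) *
        (β ^ (2 * (n + 1)) * (x + y) ^ (n + 1)) / (Nat.factorial (2 * (n + 1)))) := by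
      funext n; simp only [hSdef]; ring
    have hval : 2 * Real.cos r - ∑ i ∈ Finset.range 1, 2 * ((-1 : ℝ) ^ i *
        (β ^ (2 * i) * (x + y) ^ i) / (Nat.factorial (2 * i))) = 2 * (Real.cos r - 1) := by
      rw [Finset.sum_range_one]
      norm_num
      ring
    rw [heq]
    exact hval ▸ h
  -- absolute values
  have hGabs : ∀ p : ℕ × ℕ, |G p| =
      (2 * β ^ (2 * (p.1 + 1)) / (Nat.factorial (2 * (p.1 + 1)))) *
        (((p.2 + p.1).choose p.1 : ℝ) * d ^ p.2) * c ^ (p.1 + 1) := by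
    intro p
    simp only [hGdef, abs_mul, abs_div, abs_pow, abs_neg, abs_one, one_pow, one_mul,
      Nat.abs_cast, abs_two, abs_of_nonneg hc0, abs_of_nonneg hd0, abs_of_pos hβ]
    ring
  have hSabs : (fun n => |S n|) =
      fun n : ℕ => 2 * β ^ (2 * (n + 1)) / (Nat.factorial (2 * (n + 1))) * (x + y) ^ (n + 1) := by
    funext n
    simp only [hSdef, abs_mul, abs_div, abs_pow, abs_neg, abs_one, one_pow, one_mul,
      Nat.abs_cast, abs_two, abs_of_pos hβ, abs_of_nonneg hxy]
  have hSummAbs : Summable fun p : ℕ × ℕ => |G p| := by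
    rw [summable_prod_of_nonneg (fun p => abs_nonneg _)]
    constructor
    · intro n
      have h := (((summable_choose_mul_geometric_of_norm_lt_one (R := ℝ) n hdn).mul_left
        (2 * β ^ (2 * (n + 1)) / (Nat.factorial (2 * (n + 1))))).mul_right (c ^ (n + 1)))
      have heq : (fun j => |G (n, j)|) = fun j =>
          2 * β ^ (2 * (n + 1)) / (Nat.factorial (2 * (n + 1))) *
            (((j + n).choose n : ℝ) * d ^ j) * c ^ (n + 1) := by
        funext j; exact hGabs (n, j)
      rw [heq]
      exact h
    · have htsum : ∀ n : ℕ, ∑' j, |G (n, j)| =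
          2 * β ^ (2 * (n + 1)) / (Nat.factorial (2 * (n + 1))) * (x + y) ^ (n + 1) := by
        intro n
        have h := (((hasSum_choose_mul_geometric_of_norm_lt_one (𝕜 := ℝ) n hdn).mul_left
          (2 * β ^ (2 * (n + 1)) / (Nat.factorial (2 * (n + 1))))).mul_right (c ^ (n + 1)))
        have heq : (fun j => |G (n, j)|) = fun j =>
            2 * β ^ (2 * (n + 1)) / (Nat.factorial (2 * (n + 1))) *
              (((j + n).choose n : ℝ) * d ^ j) * c ^ (n + 1) := by
          funext j; exact hGabs (n, j)
        have h2 : HasSum (fun j => |G (n, j)|)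
            (2 * β ^ (2 * (n + 1)) / (Nat.factorial (2 * (n + 1))) *
              (1 / (1 - d) ^ (n + 1)) * c ^ (n + 1)) := by rw [heq]; exact h
        rw [h2.tsum_eq, h1dpow, ← hcDpow n]
        ring
      simp only [htsum]
      have habs : Summable fun n => |S n| := hS.summable.abs
      rw [hSabs] at habs
      exact habs
  have hSummG : Summable G := summable_abs_iff.1 hSummAbs
  have hG : HasSum G (2 * (Real.cos r - 1)) := by
    have h1 := hSummG.hasSum
    have h2 := h1.prod_fiberwise hFib
    rwa [← hS.unique h2] at h1
  -- pass to the antidiagonal decomposition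
  have hsig : HasSum (fun p : Σ n : ℕ, Finset.HasAntidiagonal.antidiagonal n => G p.2)
      (2 * (Real.cos r - 1)) :=
    (Finset.HasAntidiagonal.sigmaAntidiagonalEquivProd.hasSum_iff (f := G)).2 hG
  have hDiag : HasSum (fun q : ℕ => ∑ p ∈ Finset.HasAntidiagonal.antidiagonal q, G p)
      (2 * (Real.cos r - 1)) := by
    refine hsig.sigma fun q => ?_
    convert hasSum_fintype (fun p : Finset.HasAntidiagonal.antidiagonal q => G p) using 1
    exact (Finset.sum_coe_sort _ _).symm
  -- identify the diagonal sums with the target inner sums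
  have hfinal : (fun q : ℕ =>
      ∑ m ∈ Finset.Icc 1 (q + 1),
        (-1 : ℝ) ^ m * (2 * β ^ (2 * m) / (Nat.factorial (2 * m))) *
          (q.choose (m - 1)) * c ^ m * d ^ (q + 1 - m)) =
      fun q : ℕ => ∑ p ∈ Finset.HasAntidiagonal.antidiagonal q, G p := by
    funext q
    rw [Finset.Nat.sum_antidiagonal_eq_sum_range_succ_mk, ← Finset.Ico_add_one_right_eq_Icc,
      Finset.sum_Ico_eq_sum_range]
    have hq1 : q + 1 + 1 - 1 = q + 1 := by omega
    rw [hq1]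
    refine Finset.sum_congr rfl fun i hi => ?_
    have hiq : i ≤ q := by
      have := Finset.mem_range.1 hi; omega
    have e1 : 1 + i = i + 1 := by omega
    have e2 : i + 1 - 1 = i := by omega
    have e3 : q + 1 - (i + 1) = q - i := by omega
    have e4 : q - i + i = q := by omega
    rw [e1, e2, e3]
    simp [hGdef, e4]
  rw [hfinal]
  exact hDiag
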